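/- Let d, K be positive natural numbers and let A : Fin K → Matrix (Fin d) (Fin d) ℂ be a linearly independent family of matrices satisfying the trace-preserving condition ∑_k (A k)ᴴ * (A k) = 1. Let Φ : Matrix (Fin d) (Fin d) ℂ →ₗ[ℂ] Matrix (Fin d) (Fin d) ℂ be the map ρ ↦ ∑_k (A k) * ρ * (A k)ᴴ. Then Φ is an extreme point (with respect to the real scalar structure) of the set of completely positive trace-preserving linear maps on Matrix (Fin d) (Fin d) ℂ if and only if the family (fun p : Fin K × Fin K => (A p.1)ᴴ * (A p.2)) is linearly independent over ℂ. -/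

import Mathlib

open Matrix
open scoped ComplexOrder

namespace ChoiAux

variable {d K : ℕ}

/-- Choi matrix of a linear map on matrices. -/
def choi (Ψ : Matrix (Fin d) (Fin d) ℂ →ₗ[ℂ] Matrix (Fin d) (Fin d) ℂ) :
    Matrix (Fin d × Fin d) (Fin d × Fin d) ℂ :=
  Matrix.of fun p q => (Ψ (Matrix.single p.2 q.2 1)) p.1 q.1

lemma choi_injective :
    Function.Injective (choi (d := d)) := by
  intro Ψ₁ Ψ₂ h
  have hE : ∀ n q, Ψ₁ (Matrix.single n q 1) = Ψ₂ (Matrix.single n q 1) := by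
    intro n q
    ext m p
    exact congrFun (congrFun h (m, n)) (p, q)
  ext ρ : 1
  conv_lhs => rw [matrix_eq_sum_single ρ]
  conv_rhs => rw [matrix_eq_sum_single ρ]
  have hsb : ∀ (n q : Fin d), Matrix.single n q (ρ n q)
      = ρ n q • Matrix.single n q (1 : ℂ) := by
    intro n q
    rw [Matrix.smul_single, smul_eq_mul, mul_one]
  simp only [map_sum, hsb, _root_.map_smul, hE]

/-- The "vectorization" matrix whose columns are the Kraus operators. -/
def Vmat (A : Fin K → Matrix (Fin d) (Fin d) ℂ) : Matrix (Fin d × Fin d) (Fin K) ℂ :=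
  Matrix.of fun p k => A k p.1 p.2

/-- The map `ρ ↦ ∑ c i j • A i * ρ * (A j)ᴴ`. -/
noncomputable def kraus (A : Fin K → Matrix (Fin d) (Fin d) ℂ) (c : Matrix (Fin K) (Fin K) ℂ) :
    Matrix (Fin d) (Fin d) ℂ →ₗ[ℂ] Matrix (Fin d) (Fin d) ℂ where
  toFun ρ := ∑ i, ∑ j, c i j • (A i * ρ * (A j)ᴴ)
  map_add' x y := by
    simp [Matrix.mul_add, Matrix.add_mul, smul_add, Finset.sum_add_distrib]
  map_smul' r x := by
    simp [Finset.smul_sum, Matrix.mul_smul, Matrix.smul_mul, smul_comm r]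

lemma kraus_apply (A : Fin K → Matrix (Fin d) (Fin d) ℂ) (c : Matrix (Fin K) (Fin K) ℂ)
    (ρ : Matrix (Fin d) (Fin d) ℂ) :
    kraus A c ρ = ∑ i, ∑ j, c i j • (A i * ρ * (A j)ᴴ) := rfl

lemma entry_mul_std_mul (X Y : Matrix (Fin d) (Fin d) ℂ) (m n q p : Fin d) :
    (X * Matrix.single n q (1 : ℂ) * Y) m p = X m n * Y q p := by
  rw [Matrix.mul_assoc, Matrix.mul_apply]
  rw [Finset.sum_eq_single n]
  · rw [Matrix.single_mul_apply_same, one_mul]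
  · intro b _ hb
    rw [Matrix.single_mul_apply_of_ne (h := hb), mul_zero]
  · simp

lemma choi_kraus (A : Fin K → Matrix (Fin d) (Fin d) ℂ) (c : Matrix (Fin K) (Fin K) ℂ) :
    choi (kraus A c) = Vmat A * c * (Vmat A)ᴴ := by
  ext ⟨m, n⟩ ⟨p, q⟩
  show (kraus A c (Matrix.single n q 1)) m p = _
  rw [kraus_apply]
  conv_lhs => simp only [Matrix.sum_apply, Matrix.smul_apply, smul_eq_mul,
    entry_mul_std_mul]
  conv_rhs => simp only [Matrix.mul_apply, Matrix.conjTranspose_apply, Vmat,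
    Matrix.of_apply, Finset.sum_mul, Finset.mul_sum]
  rw [Finset.sum_comm]
  apply Finset.sum_congr rfl; intro j _
  apply Finset.sum_congr rfl; intro i _
  rw [Matrix.conjTranspose_apply]
  ring

lemma trace_kraus (A : Fin K → Matrix (Fin d) (Fin d) ℂ) (c : Matrix (Fin K) (Fin K) ℂ)
    (ρ : Matrix (Fin d) (Fin d) ℂ) :
    (kraus A c ρ).trace = (ρ * ∑ i, ∑ j, c i j • ((A j)ᴴ * A i)).trace := by
  rw [kraus_apply, Matrix.trace_sum]
  rw [Matrix.mul_sum, Matrix.trace_sum]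
  apply Finset.sum_congr rfl; intro i _
  rw [Matrix.trace_sum, Matrix.mul_sum, Matrix.trace_sum]
  apply Finset.sum_congr rfl; intro j _
  rw [Matrix.trace_smul, Matrix.mul_smul, Matrix.trace_smul]
  congr 1
  rw [Matrix.trace_mul_cycle, ← Matrix.mul_assoc, Matrix.trace_mul_comm, Matrix.mul_assoc]

lemma star_dot_self_eq (n : Type*) [Fintype n] (x : n → ℂ) :
    star x ⬝ᵥ x = ((∑ i, Complex.normSq (x i) : ℝ) : ℂ) := by
  push_cast
  simp [dotProduct, Complex.normSq_eq_conj_mul_self]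

lemma posSemidef_one_add_smul (c : Matrix (Fin K) (Fin K) ℂ) (hc : cᴴ = c) (t : ℝ)
    (ht : |t| * (∑ i, ∑ j, ‖c i j‖) ≤ 1) :
    (1 + (t : ℂ) • c).PosSemidef := by
  refine Matrix.PosSemidef.of_dotProduct_mulVec_nonneg ?_ ?_
  · show _ᴴ = _
    rw [conjTranspose_add, conjTranspose_smul, hc, conjTranspose_one]
    norm_num
  intro x
  have hmv : (1 + (t : ℂ) • c) *ᵥ x = x + (t : ℂ) • (c *ᵥ x) := by
    rw [add_mulVec, one_mulVec, smul_mulVec]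
  rw [hmv, dotProduct_add, dotProduct_smul]
  set z := star x ⬝ᵥ c *ᵥ x with hz
  have hzr : z = (z.re : ℂ) := by
    have h1 : (starRingEnd ℂ) z = z := by
      rw [hz]
      calc (starRingEnd ℂ) (star x ⬝ᵥ c *ᵥ x) = star (c *ᵥ x) ⬝ᵥ x := by
            rw [show (starRingEnd ℂ) (star x ⬝ᵥ c *ᵥ x) = star (star x ⬝ᵥ c *ᵥ x) from rfl,
              ← star_dotProduct_star, star_star]
        _ = (star x ᵥ* cᴴ) ⬝ᵥ x := by rw [star_mulVec]
        _ = star x ⬝ᵥ cᴴ *ᵥ x := by rw [dotProduct_mulVec]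
        _ = star x ⬝ᵥ c *ᵥ x := by rw [hc]
    exact (Complex.conj_eq_iff_re.1 h1).symm
  set N : ℝ := ∑ i, Complex.normSq (x i) with hN
  have hNnn : ∀ i, Complex.normSq (x i) ≤ N :=
    fun i => Finset.single_le_sum (fun k _ => Complex.normSq_nonneg (x k)) (Finset.mem_univ i)
  have hN0 : 0 ≤ N := Finset.sum_nonneg fun k _ => Complex.normSq_nonneg (x k)
  have hzbound : ‖z‖ ≤ (∑ i, ∑ j, ‖c i j‖) * N := by
    rw [hz]
    calc ‖star x ⬝ᵥ c *ᵥ x‖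
        = ‖∑ i, ∑ j, star (x i) * c i j * x j‖ := by
          congr 1
          simp [dotProduct, mulVec, Finset.mul_sum, mul_assoc]
      _ ≤ ∑ i, ∑ j, ‖star (x i) * c i j * x j‖ := by
          refine (norm_sum_le _ _).trans ?_
          exact Finset.sum_le_sum fun i _ => norm_sum_le _ _
      _ ≤ ∑ i, ∑ j, ‖c i j‖ * N := by
          refine Finset.sum_le_sum fun i _ => Finset.sum_le_sum fun j _ => ?_
          rw [norm_mul, norm_mul]
          have h1 : ‖star (x i)‖ = ‖x i‖ := by
            simp
          rw [h1]
          have h2 : ‖x i‖ * ‖x j‖ ≤ N := by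
            nlinarith [hNnn i, hNnn j, Complex.sq_norm (x i), Complex.sq_norm (x j),
              norm_nonneg (x i), norm_nonneg (x j)]
          calc ‖x i‖ * ‖c i j‖ * ‖x j‖
              = ‖c i j‖ * (‖x i‖ * ‖x j‖) := by ring
            _ ≤ ‖c i j‖ * N := by
                exact mul_le_mul_of_nonneg_left h2 (norm_nonneg _)
      _ = (∑ i, ∑ j, ‖c i j‖) * N := by
          rw [Finset.sum_mul]
          exact Finset.sum_congr rfl fun i _ => by rw [Finset.sum_mul]
  have hfin : star x ⬝ᵥ x + (t : ℂ) • z = ((N + t * z.re : ℝ) : ℂ) := by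
    rw [star_dot_self_eq, smul_eq_mul]
    conv_lhs => rw [hzr]
    rw [hN]
    push_cast
    ring
  rw [hfin, Complex.zero_le_real]
  have habs : |z.re| ≤ ‖z‖ := Complex.abs_re_le_norm z
  set κ := ∑ i, ∑ j, ‖c i j‖ with hκ
  have hκ0 : 0 ≤ κ := Finset.sum_nonneg fun i _ => Finset.sum_nonneg fun j _ =>
    norm_nonneg _
  have h3 : |t * z.re| ≤ N := by
    rw [abs_mul]
    calc |t| * |z.re| ≤ |t| * (κ * N) :=
          mul_le_mul_of_nonneg_left (habs.trans hzbound) (abs_nonneg t)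
      _ = (|t| * κ) * N := by ring
      _ ≤ 1 * N := mul_le_mul_of_nonneg_right ht hN0
      _ = N := one_mul N
  nlinarith [neg_abs_le (t * z.re)]

/-- Entry-reading linear map. -/
def entRead : Matrix (Fin d) (Fin d) ℂ →ₗ[ℂ] ((Fin d × Fin d) → ℂ) where
  toFun M := fun p => M p.1 p.2
  map_add' _ _ := rfl
  map_smul' _ _ := rfl

lemma vmat_mulVec_eq_zero {A : Fin K → Matrix (Fin d) (Fin d) ℂ}
    (hA : LinearIndependent ℂ A) {x : Fin K → ℂ} (hx : Vmat A *ᵥ x = 0) : x = 0 := by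
  have hli : LinearIndependent ℂ (fun k => (Vmat A)ᵀ k) := by
    have : (fun k => (Vmat A)ᵀ k) = entRead ∘ A := rfl
    rw [this]
    apply hA.map' entRead
    rw [LinearMap.ker_eq_bot]
    intro M M' h
    ext i j
    exact congrFun h (i, j)
  have hinj : Function.Injective (Vmat A).mulVec := Matrix.mulVec_injective_iff.mpr hli
  exact hinj (a₁ := x) (a₂ := 0) (by rw [hx, Matrix.mulVec_zero])

lemma gram_quad (V : Matrix (Fin d × Fin d) (Fin K) ℂ) (y : Fin K → ℂ) :
    star y ⬝ᵥ ((Vᴴ * V) *ᵥ y) = star (V *ᵥ y) ⬝ᵥ (V *ᵥ y) := by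
  rw [← Matrix.mulVec_mulVec, Matrix.dotProduct_mulVec, Matrix.star_mulVec]

lemma gram_isUnit {A : Fin K → Matrix (Fin d) (Fin d) ℂ}
    (hA : LinearIndependent ℂ A) : IsUnit ((Vmat A)ᴴ * Vmat A) := by
  rw [← Matrix.mulVec_injective_iff_isUnit]
  have h0 : ∀ y : Fin K → ℂ, ((Vmat A)ᴴ * Vmat A) *ᵥ y = 0 → y = 0 := by
    intro y hy
    have h1 : star (Vmat A *ᵥ y) ⬝ᵥ (Vmat A *ᵥ y) = 0 := by
      rw [← gram_quad, hy, dotProduct_zero]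
    exact vmat_mulVec_eq_zero hA (dotProduct_star_self_eq_zero.mp h1)
  intro y₁ y₂ h
  have h2 : ((Vmat A)ᴴ * Vmat A) *ᵥ (y₁ - y₂) = 0 := by
    rw [Matrix.mulVec_sub, h, sub_self]
  exact sub_eq_zero.mp (h0 _ h2)

noncomputable def Wmat (A : Fin K → Matrix (Fin d) (Fin d) ℂ) :
    Matrix (Fin K) (Fin d × Fin d) ℂ :=
  ((Vmat A)ᴴ * Vmat A)⁻¹ * (Vmat A)ᴴ

lemma Wmat_mul_vmat {A : Fin K → Matrix (Fin d) (Fin d) ℂ}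
    (hA : LinearIndependent ℂ A) : Wmat A * Vmat A = 1 := by
  rw [Wmat, Matrix.mul_assoc]
  exact Matrix.nonsing_inv_mul _ ((Matrix.isUnit_iff_isUnit_det _).mp (gram_isUnit hA))

lemma sandwich_cancel {A : Fin K → Matrix (Fin d) (Fin d) ℂ}
    (hA : LinearIndependent ℂ A) {c c' : Matrix (Fin K) (Fin K) ℂ}
    (h : Vmat A * c * (Vmat A)ᴴ = Vmat A * c' * (Vmat A)ᴴ) : c = c' := by
  have hVW : (Vmat A)ᴴ * (Wmat A)ᴴ = 1 := by
    rw [← Matrix.conjTranspose_mul, Wmat_mul_vmat hA, Matrix.conjTranspose_one]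
  have key : ∀ c₀ : Matrix (Fin K) (Fin K) ℂ,
      Wmat A * (Vmat A * c₀ * (Vmat A)ᴴ) * (Wmat A)ᴴ = c₀ := by
    intro c₀
    calc Wmat A * (Vmat A * c₀ * (Vmat A)ᴴ) * (Wmat A)ᴴ
        = (Wmat A * Vmat A) * c₀ * ((Vmat A)ᴴ * (Wmat A)ᴴ) := by
          simp only [Matrix.mul_assoc]
      _ = c₀ := by rw [Wmat_mul_vmat hA, hVW, Matrix.one_mul, Matrix.mul_one]
  have h2 : Wmat A * (Vmat A * c * (Vmat A)ᴴ) * (Wmat A)ᴴ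
      = Wmat A * (Vmat A * c' * (Vmat A)ᴴ) * (Wmat A)ᴴ := by rw [h]
  rwa [key c, key c'] at h2

lemma trace_std_mul (T : Matrix (Fin d) (Fin d) ℂ) (i j : Fin d) :
    (Matrix.single i j (1 : ℂ) * T).trace = T j i := by
  rw [Matrix.trace]
  rw [Finset.sum_eq_single i]
  · rw [Matrix.diag_apply, Matrix.single_mul_apply_same, one_mul]
  · intro b _ hb
    rw [Matrix.diag_apply, Matrix.single_mul_apply_of_ne (h := hb)]
  · simp

lemma eq_of_forall_trace_mul_eq {T T' : Matrix (Fin d) (Fin d) ℂ}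
    (h : ∀ ρ : Matrix (Fin d) (Fin d) ℂ, (ρ * T).trace = (ρ * T').trace) : T = T' := by
  ext j i
  have := h (Matrix.single i j 1)
  rwa [trace_std_mul, trace_std_mul] at this

lemma sum_one_smul (f : Fin K → Fin K → Matrix (Fin d) (Fin d) ℂ) :
    ∑ i, ∑ j, (1 : Matrix (Fin K) (Fin K) ℂ) i j • f i j = ∑ k, f k k := by
  apply Finset.sum_congr rfl
  intro i _
  rw [Finset.sum_eq_single i]
  · rw [Matrix.one_apply_eq, one_smul]
  · intro b _ hb
    rw [Matrix.one_apply_ne (Ne.symm hb), zero_smul]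
  · simp

lemma sum_perturb (z : ℂ) (c : Matrix (Fin K) (Fin K) ℂ)
    (f : Fin K → Fin K → Matrix (Fin d) (Fin d) ℂ) :
    ∑ i, ∑ j, (1 + z • c) i j • f i j
      = (∑ k, f k k) + z • ∑ i, ∑ j, c i j • f i j := by
  have step : ∀ i j, (1 + z • c) i j • f i j
      = (1 : Matrix (Fin K) (Fin K) ℂ) i j • f i j + z • (c i j • f i j) := by
    intro i j
    rw [Matrix.add_apply, Matrix.smul_apply, add_smul, smul_eq_mul, mul_smul]
  simp only [step, Finset.sum_add_distrib, ← Finset.smul_sum, sum_one_smul]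

/-- The relation map `c ↦ ∑ c i j • (A i)ᴴ * A j`. -/
noncomputable def relMap (A : Fin K → Matrix (Fin d) (Fin d) ℂ) :
    Matrix (Fin K) (Fin K) ℂ →ₗ[ℂ] Matrix (Fin d) (Fin d) ℂ where
  toFun c := ∑ i, ∑ j, c i j • ((A i)ᴴ * A j)
  map_add' x y := by
    simp [Matrix.add_apply, add_smul, Finset.sum_add_distrib]
  map_smul' r x := by
    simp [Matrix.smul_apply, smul_smul, Finset.smul_sum]

lemma relMap_conjTranspose (A : Fin K → Matrix (Fin d) (Fin d) ℂ)
    (c : Matrix (Fin K) (Fin K) ℂ) :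
    relMap A cᴴ = (relMap A c)ᴴ := by
  show ∑ i, ∑ j, cᴴ i j • ((A i)ᴴ * A j) = (∑ i, ∑ j, c i j • ((A i)ᴴ * A j))ᴴ
  rw [Matrix.conjTranspose_sum]
  rw [Finset.sum_comm]
  apply Finset.sum_congr rfl; intro j _
  rw [Matrix.conjTranspose_sum]
  apply Finset.sum_congr rfl; intro i _
  rw [Matrix.conjTranspose_smul, Matrix.conjTranspose_mul, Matrix.conjTranspose_conjTranspose]
  rfl

end ChoiAux

open ChoiAux in
theorem stmt0 (d K : ℕ) (hd : 0 < d) (hK : 0 < K)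
    (A : Fin K → Matrix (Fin d) (Fin d) ℂ)
    (hA : LinearIndependent ℂ A)
    (hTP : ∑ k, (A k)ᴴ * (A k) = 1)
    (Φ : Matrix (Fin d) (Fin d) ℂ →ₗ[ℂ] Matrix (Fin d) (Fin d) ℂ)
    (hΦ : ∀ ρ, Φ ρ = ∑ k, (A k) * ρ * (A k)ᴴ) :
    Φ ∈ Set.extremePoints ℝ
      {Ψ : Matrix (Fin d) (Fin d) ℂ →ₗ[ℂ] Matrix (Fin d) (Fin d) ℂ |
        (∀ ρ, (Ψ ρ).trace = ρ.trace) ∧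
        (Matrix.of (fun p q : Fin d × Fin d =>
          (Ψ (Matrix.single p.2 q.2 1)) p.1 q.1)).PosSemidef} ↔
    LinearIndependent ℂ (fun p : Fin K × Fin K => (A p.1)ᴴ * (A p.2)) := by
  classical
  set S : Set (Matrix (Fin d) (Fin d) ℂ →ₗ[ℂ] Matrix (Fin d) (Fin d) ℂ) :=
    {Ψ : Matrix (Fin d) (Fin d) ℂ →ₗ[ℂ] Matrix (Fin d) (Fin d) ℂ |
        (∀ ρ, (Ψ ρ).trace = ρ.trace) ∧
        (Matrix.of (fun p q : Fin d × Fin d =>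
          (Ψ (Matrix.single p.2 q.2 1)) p.1 q.1)).PosSemidef} with hSdef
  have hmemS : ∀ Ψ, Ψ ∈ S ↔ (∀ ρ, (Ψ ρ).trace = ρ.trace) ∧ (choi Ψ).PosSemidef := by
    intro Ψ; rfl
  have hΦkraus : Φ = kraus A 1 := by
    apply LinearMap.ext; intro ρ
    rw [hΦ ρ, kraus_apply, sum_one_smul (fun i j => A i * ρ * (A j)ᴴ)]
  have hkraus_trace : ∀ c : Matrix (Fin K) (Fin K) ℂ,
      (∑ i, ∑ j, c i j • ((A j)ᴴ * A i)) = 1 → ∀ ρ, ((kraus A c) ρ).trace = ρ.trace := by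
    intro c hc ρ
    rw [trace_kraus, hc, Matrix.mul_one]
  have hone : (∑ i, ∑ j, (1 : Matrix (Fin K) (Fin K) ℂ) i j • ((A j)ᴴ * A i)) = 1 := by
    rw [sum_one_smul (fun i j => (A j)ᴴ * A i)]
    exact hTP
  have hΦS : Φ ∈ S := by
    rw [hmemS]
    refine ⟨?_, ?_⟩
    · rw [hΦkraus]
      exact hkraus_trace 1 hone
    · rw [hΦkraus, choi_kraus]
      exact (Matrix.PosSemidef.one).mul_mul_conjTranspose_same _
  constructor
  · -- extreme → linear independence
    intro hext
    by_contra hnli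
    obtain ⟨g, hg, p₀, hp₀⟩ := Fintype.not_linearIndependent_iff.mp hnli
    set c₀ : Matrix (Fin K) (Fin K) ℂ := Matrix.of fun i j => g (i, j) with hc₀
    have hc₀ne : c₀ ≠ 0 := by
      intro h
      exact hp₀ (by simpa [hc₀] using congrFun (congrFun h p₀.1) p₀.2)
    have hrel : relMap A c₀ = 0 := by
      show ∑ i, ∑ j, c₀ i j • ((A i)ᴴ * A j) = 0
      exact (Fintype.sum_prod_type
        (f := fun p : Fin K × Fin K => g p • ((A p.1)ᴴ * A p.2))).symm.trans hg
    -- find a nonzero Hermitian relation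
    obtain ⟨e, he0, heH, heR⟩ : ∃ e : Matrix (Fin K) (Fin K) ℂ,
        e ≠ 0 ∧ eᴴ = e ∧ relMap A e = 0 := by
      by_cases h1 : c₀ + c₀ᴴ = 0
      · refine ⟨Complex.I • (c₀ - c₀ᴴ), ?_, ?_, ?_⟩
        · intro h2
          apply hc₀ne
          have h3 : c₀ - c₀ᴴ = 0 := by
            have := congrArg (fun M => (-Complex.I) • M) h2
            simpa [smul_smul, Complex.I_mul_I] using this
          have h4 : (2 : ℂ) • c₀ = 0 := by
            have := congrArg₂ (· + ·) h1 h3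
            simpa [two_smul, add_add_sub_cancel] using this
          simpa using congrArg (fun M => ((2 : ℂ)⁻¹) • M) h4
        · rw [Matrix.conjTranspose_smul, Matrix.conjTranspose_sub,
            Matrix.conjTranspose_conjTranspose, Complex.star_def, Complex.conj_I]
          module
        · rw [_root_.map_smul, map_sub, hrel, relMap_conjTranspose, hrel]
          simp
      · refine ⟨c₀ + c₀ᴴ, h1, ?_, ?_⟩
        · rw [Matrix.conjTranspose_add, Matrix.conjTranspose_conjTranspose, add_comm]
        · rw [map_add, hrel, relMap_conjTranspose, hrel]
          simp
    set c : Matrix (Fin K) (Fin K) ℂ := eᵀ with hc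
    have hcH : cᴴ = c := by
      ext i j
      have h5 := congrFun (congrFun heH j) i
      simp only [Matrix.conjTranspose_apply] at h5
      simp only [hc, Matrix.conjTranspose_apply, Matrix.transpose_apply]
      exact h5
    have hc0 : c ≠ 0 := by
      intro h
      apply he0
      have h7 : eᵀ = 0 := by rw [← hc]; exact h
      simpa using congrArg Matrix.transpose h7
    have hT : (∑ i, ∑ j, c i j • ((A j)ᴴ * A i)) = 0 := by
      rw [Finset.sum_comm]
      exact heR
    set κ : ℝ := ∑ i, ∑ j, ‖c i j‖ with hκ
    have hκ0 : 0 ≤ κ := Finset.sum_nonneg fun i _ => Finset.sum_nonneg fun j _ =>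
      norm_nonneg _
    set ε : ℝ := 1 / (κ + 1) with hε
    have hεpos : 0 < ε := by positivity
    have hbound : ∀ t : ℝ, |t| = ε → |t| * κ ≤ 1 := by
      intro t ht
      rw [ht, hε]
      rw [div_mul_eq_mul_div, one_mul, div_le_one (by linarith)]
      linarith
    set cp : Matrix (Fin K) (Fin K) ℂ := 1 + (ε : ℂ) • c with hcp
    set cm : Matrix (Fin K) (Fin K) ℂ := 1 + ((-ε : ℝ) : ℂ) • c with hcm
    have hmem : ∀ (t : ℝ), |t| = ε → kraus A (1 + (t : ℂ) • c) ∈ S := by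
      intro t ht
      rw [hmemS]
      constructor
      · apply hkraus_trace
        rw [sum_perturb (t : ℂ) c (fun i j => (A j)ᴴ * A i)]
        rw [show (∑ k, (A k)ᴴ * A k) = 1 from hTP, hT]
        simp
      · rw [choi_kraus]
        exact (posSemidef_one_add_smul c hcH t (hbound t ht)).mul_mul_conjTranspose_same _
    have hmemp : kraus A cp ∈ S := hmem ε (abs_of_pos hεpos)
    have hmemm : kraus A cm ∈ S := hmem (-ε) (by rw [abs_neg, abs_of_pos hεpos])
    have hkraus_add : ∀ (c₁ c₂ : Matrix (Fin K) (Fin K) ℂ) (ρ : Matrix (Fin d) (Fin d) ℂ),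
        kraus A c₁ ρ + kraus A c₂ ρ = kraus A (c₁ + c₂) ρ := by
      intro c₁ c₂ ρ
      rw [kraus_apply, kraus_apply, kraus_apply, ← Finset.sum_add_distrib]
      apply Finset.sum_congr rfl; intro i _
      rw [← Finset.sum_add_distrib]
      apply Finset.sum_congr rfl; intro j _
      rw [Matrix.add_apply, add_smul]
    have hcpm : cp + cm = 1 + 1 := by
      rw [hcp, hcm]
      push_cast
      module
    have hseg : Φ ∈ openSegment ℝ (kraus A cp) (kraus A cm) := by
      refine ⟨1/2, 1/2, by norm_num, by norm_num, by norm_num, ?_⟩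
      apply LinearMap.ext; intro ρ
      simp only [LinearMap.add_apply, LinearMap.smul_apply]
      rw [← smul_add, hkraus_add, hcpm, ← hkraus_add, ← hΦkraus]
      rw [← two_smul ℝ (Φ ρ), smul_smul]
      norm_num
    have := (hext.2 hmemp hmemm hseg)
    -- kraus A cp = Φ gives cp = 1, contradiction
    have hchoi : Vmat A * cp * (Vmat A)ᴴ
        = Vmat A * (1 : Matrix (Fin K) (Fin K) ℂ) * (Vmat A)ᴴ := by
      rw [← choi_kraus, ← choi_kraus, this, hΦkraus]
    have hcp1 : cp = 1 := sandwich_cancel hA hchoi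
    have : (ε : ℂ) • c = 0 := by
      have := congrArg (fun M => M - (1 : Matrix (Fin K) (Fin K) ℂ)) hcp1
      simpa [hcp] using this
    have : c = 0 := by
      have hε0 : (ε : ℂ) ≠ 0 := by
        simp only [ne_eq, Complex.ofReal_eq_zero]
        exact ne_of_gt hεpos
      exact (smul_eq_zero.mp this).resolve_left hε0
    exact hc0 this
  · -- linear independence → extreme
    intro hli
    refine ⟨hΦS, ?_⟩
    intro x₁ hx₁ x₂ hx₂ hseg
    obtain ⟨a, b, ha, hb, hab, hsum⟩ := hseg
    -- reduce to showing x₁ = Φ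
    suffices hx1 : x₁ = Φ by
      exact hx1
    -- Choi matrices
    have h1 : (choi x₁).PosSemidef := ((hmemS x₁).mp hx₁).2
    have h2 : (choi x₂).PosSemidef := ((hmemS x₂).mp hx₂).2
    have hchoisum : a • choi x₁ + b • choi x₂
        = Vmat A * (1 : Matrix (Fin K) (Fin K) ℂ) * (Vmat A)ᴴ := by
      rw [← choi_kraus, ← hΦkraus, ← hsum]
      rfl
    -- kernel inclusion
    have key : ∀ x : Fin d × Fin d → ℂ, (Vmat A)ᴴ *ᵥ x = 0 → choi x₁ *ᵥ x = 0 := by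
      intro x hx
      have hq0 : star x ⬝ᵥ (Vmat A * (1 : Matrix (Fin K) (Fin K) ℂ) * (Vmat A)ᴴ) *ᵥ x = 0 := by
        rw [Matrix.mul_one, ← Matrix.mulVec_mulVec, hx, Matrix.mulVec_zero, dotProduct_zero]
      have hsplit : (a : ℂ) * (star x ⬝ᵥ choi x₁ *ᵥ x)
          + (b : ℂ) * (star x ⬝ᵥ choi x₂ *ᵥ x) = 0 := by
        rw [← hchoisum] at hq0
        rw [← hq0, Matrix.add_mulVec, dotProduct_add]
        congr 1
        · rw [Matrix.smul_mulVec, dotProduct_smul]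
          rw [Complex.real_smul]
        · rw [Matrix.smul_mulVec, dotProduct_smul]
          rw [Complex.real_smul]
      have hq1 : (0:ℂ) ≤ star x ⬝ᵥ choi x₁ *ᵥ x := h1.dotProduct_mulVec_nonneg x
      have hq2 : (0:ℂ) ≤ star x ⬝ᵥ choi x₂ *ᵥ x := h2.dotProduct_mulVec_nonneg x
      have ha' : (0:ℂ) ≤ (a : ℂ) := by
        rw [Complex.zero_le_real]; exact le_of_lt ha
      have hb' : (0:ℂ) ≤ (b : ℂ) := by
        rw [Complex.zero_le_real]; exact le_of_lt hb
      have hz1 : (a : ℂ) * (star x ⬝ᵥ choi x₁ *ᵥ x) = 0 := by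
        have t1 : (0:ℂ) ≤ (a : ℂ) * (star x ⬝ᵥ choi x₁ *ᵥ x) := mul_nonneg ha' hq1
        have t2 : (0:ℂ) ≤ (b : ℂ) * (star x ⬝ᵥ choi x₂ *ᵥ x) := mul_nonneg hb' hq2
        have := add_eq_zero_iff_of_nonneg t1 t2
        exact (this.mp hsplit).1
      have hzz : star x ⬝ᵥ choi x₁ *ᵥ x = 0 := by
        have ha0 : (a : ℂ) ≠ 0 := by
          simp only [ne_eq, Complex.ofReal_eq_zero]; exact ne_of_gt ha
        exact (mul_eq_zero.mp hz1).resolve_left ha0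
      exact (h1.dotProduct_mulVec_zero_iff x).mp hzz
    -- projection argument
    set V := Vmat A with hV
    set W := Wmat A with hW
    set P : Matrix (Fin d × Fin d) (Fin d × Fin d) ℂ := V * W with hP
    have hdet : IsUnit ((Vᴴ * V).det) := (Matrix.isUnit_iff_isUnit_det _).mp (gram_isUnit hA)
    have hWdef : W = (Vᴴ * V)⁻¹ * Vᴴ := by rw [hW, hV]; rfl
    have hVP0 : Vᴴ * P = Vᴴ := by
      rw [hP, hWdef]
      calc Vᴴ * (V * ((Vᴴ * V)⁻¹ * Vᴴ)) = ((Vᴴ * V) * (Vᴴ * V)⁻¹) * Vᴴ := by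
            simp only [Matrix.mul_assoc]
        _ = Vᴴ := by rw [Matrix.mul_nonsing_inv _ hdet, Matrix.one_mul]
    have hVP : Vᴴ * (1 - P) = 0 := by
      rw [Matrix.mul_sub, Matrix.mul_one, hVP0, sub_self]
    have hN1P : choi x₁ * (1 - P) = 0 := by
      ext i j
      have hz : (choi x₁ * (1 - P)) *ᵥ Pi.single j 1 = 0 := by
        rw [← Matrix.mulVec_mulVec]
        apply key
        rw [Matrix.mulVec_mulVec, hVP, Matrix.zero_mulVec]
      have := congrFun hz i
      simpa using this
    have hNP : choi x₁ = choi x₁ * P := by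
      have h6 : choi x₁ * 1 - choi x₁ * P = 0 := by
        rw [← Matrix.mul_sub]; exact hN1P
      rw [Matrix.mul_one] at h6
      exact (sub_eq_zero.mp h6)
    have hPH : Pᴴ = P := by
      rw [hP, hWdef]
      simp only [Matrix.conjTranspose_mul, Matrix.conjTranspose_nonsing_inv,
        Matrix.conjTranspose_conjTranspose, Matrix.mul_assoc]
    have hPN : choi x₁ = P * choi x₁ := by
      conv_lhs => rw [← h1.1.eq]
      conv_lhs => rw [hNP]
      rw [Matrix.conjTranspose_mul, hPH, h1.1.eq]
    set cc : Matrix (Fin K) (Fin K) ℂ := W * choi x₁ * Wᴴ with hcc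
    have hN1V : choi x₁ = V * cc * Vᴴ := by
      have hPalt : P = Wᴴ * Vᴴ := by
        rw [← hPH, hP, Matrix.conjTranspose_mul]
      have e1 : choi x₁ = choi x₁ * (Wᴴ * Vᴴ) := by rw [← hPalt]; exact hNP
      calc choi x₁ = P * choi x₁ := hPN
        _ = P * (choi x₁ * (Wᴴ * Vᴴ)) := congrArg (fun M => P * M) e1
        _ = V * (W * choi x₁ * Wᴴ) * Vᴴ := by
            rw [hP]
            simp only [Matrix.mul_assoc]
        _ = V * cc * Vᴴ := by rw [hcc]
    have hx1cc : x₁ = kraus A cc := by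
      apply choi_injective
      rw [choi_kraus, ← hN1V]
    -- trace condition forces cc = 1
    have hTcc : (∑ i, ∑ j, cc i j • ((A j)ᴴ * A i)) = 1 := by
      apply eq_of_forall_trace_mul_eq (T := ∑ i, ∑ j, cc i j • ((A j)ᴴ * A i)) (T' := 1)
      intro ρ
      have := ((hmemS x₁).mp hx₁).1 ρ
      rw [hx1cc] at this
      rw [trace_kraus] at this
      rw [this, Matrix.mul_one]
    -- use linear independence
    have hgzero : ∀ p : Fin K × Fin K, cc p.2 p.1 - (1 : Matrix (Fin K) (Fin K) ℂ) p.2 p.1 = 0 := by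
      have hsum0 : ∑ p : Fin K × Fin K,
          (cc p.2 p.1 - (1 : Matrix (Fin K) (Fin K) ℂ) p.2 p.1) • ((A p.1)ᴴ * A p.2) = 0 := by
        rw [Fintype.sum_prod_type]
        have hsplit : ∀ i j : Fin K,
            (cc j i - (1 : Matrix (Fin K) (Fin K) ℂ) j i) • ((A i)ᴴ * A j)
            = cc j i • ((A i)ᴴ * A j) - (1 : Matrix (Fin K) (Fin K) ℂ) j i • ((A i)ᴴ * A j) := by
          intro i j; rw [sub_smul]
        simp only [hsplit, Finset.sum_sub_distrib]
        have e1 : ∑ i, ∑ j, cc j i • ((A i)ᴴ * A j) = 1 := by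
          rw [Finset.sum_comm]; exact hTcc
        have e2 : ∑ i, ∑ j, (1 : Matrix (Fin K) (Fin K) ℂ) j i • ((A i)ᴴ * A j) = 1 := by
          rw [Finset.sum_comm]; exact hone
        rw [e1, e2, sub_self]
      exact Fintype.linearIndependent_iff.mp hli _ hsum0
    have hcc1 : cc = 1 := by
      ext i j
      have := hgzero (j, i)
      simpa [sub_eq_zero] using this
    rw [hx1cc, hcc1, ← hΦkraus]
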